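/- If a nonnegative square matrix B is fully indecomposable, then B has total support. -/

import Mathlib

/-- `B` is partly decomposable: there are nonempty index sets `S`, `T` with
`|S| + |T| = n` such that `B i j = 0` for all `i ∈ S`, `j ∈ T` (equivalently,
permutation matrices `P`, `Q` bring `B` to the block form `[[E,0],[C,D]]` with
`E`, `D` square). -/
def PartlyDecomposable {n : ℕ} (B : Matrix (Fin n) (Fin n) ℝ) : Prop :=
  ∃ S T : Finset (Fin n), S.Nonempty ∧ T.Nonempty ∧ S.card + T.card = n ∧
    ∀ i ∈ S, ∀ j ∈ T, B i j = 0

/-- `B` is fully indecomposable if it is not partly decomposable. -/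
def FullyIndecomposable {n : ℕ} (B : Matrix (Fin n) (Fin n) ℝ) : Prop :=
  ¬ PartlyDecomposable B

/-- Every nonzero entry of `B` lies on a positive diagonal. -/
def TotalSupport {n : ℕ} (B : Matrix (Fin n) (Fin n) ℝ) : Prop :=
  ∀ i j, B i j ≠ 0 →
    ∃ σ : Equiv.Perm (Fin n), σ i = j ∧ ∀ k, 0 < B k (σ k)

/-- A nonnegative fully indecomposable matrix has total support. -/
theorem stmt_7 (n : ℕ) (B : Matrix (Fin n) (Fin n) ℝ)
    (hB : ∀ i j, 0 ≤ B i j) (hfi : FullyIndecomposable B) :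
    TotalSupport B := by
  -- auxiliary: a zero block of total size ≥ n (with both sets proper and nonempty)
  -- gives partial decomposability
  have key : ∀ (S T : Finset (Fin n)), S.Nonempty → T.Nonempty →
      (∃ i, i ∉ S) → (∃ j, j ∉ T) → n ≤ S.card + T.card →
      (∀ i ∈ S, ∀ j ∈ T, B i j = 0) → PartlyDecomposable B := by
    intro S T hS hT ⟨i0, hi0⟩ ⟨j0, hj0⟩ hcard hzero
    have hSlt : S.card < n := by
      have := Finset.card_lt_univ_of_notMem hi0
      simpa using this
    have h1 : n - S.card ≤ T.card := by omega
    obtain ⟨T', hT'sub, hT'card⟩ := Finset.exists_subset_card_eq h1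
    refine ⟨S, T', hS, ?_, ?_, ?_⟩
    · rw [← Finset.card_pos, hT'card]; omega
    · rw [hT'card]; omega
    · exact fun i hi j hj => hzero i hi j (hT'sub hj)
  intro i j hij
  classical
  -- the "allowed column" sets: force `i ↦ j`, elsewhere positive entries off column `j`
  set t : Fin n → Finset (Fin n) :=
    fun k => if k = i then {j} else Finset.univ.filter (fun l => 0 < B k l ∧ l ≠ j) with ht
  have hall : ∀ s : Finset (Fin n), s.card ≤ (s.biUnion t).card := by
    by_contra hcon
    push_neg at hcon
    obtain ⟨A, hA⟩ := hcon
    set U := A.biUnion t with hU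
    have hAn : A.card ≤ n := by simpa using Finset.card_le_card (Finset.subset_univ A)
    have hUn : U.card ≤ n := by simpa using Finset.card_le_card (Finset.subset_univ U)
    by_cases hiA : i ∈ A
    · -- case i ∈ A : zero block (A \ {i}) × Uᶜ
      have hjU : j ∈ U := by
        refine Finset.mem_biUnion.mpr ⟨i, hiA, ?_⟩
        simp [ht]
      have hU1 : 1 ≤ U.card := Finset.card_pos.mpr ⟨j, hjU⟩
      have hA2 : 2 ≤ A.card := by omega
      apply hfi
      refine key (A.erase i) Uᶜ ?_ ?_ ⟨i, by simp⟩ ⟨j, by simp [hjU]⟩ ?_ ?_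
      · rw [← Finset.card_pos, Finset.card_erase_of_mem hiA]; omega
      · rw [← Finset.card_pos, Finset.card_compl]; simp only [Fintype.card_fin]; omega
      · rw [Finset.card_erase_of_mem hiA, Finset.card_compl]
        simp only [Fintype.card_fin]; omega
      · intro k hk l hl
        by_contra hne
        have hpos : 0 < B k l := lt_of_le_of_ne (hB k l) (Ne.symm hne)
        have hki : k ≠ i := Finset.ne_of_mem_erase hk
        have hlU : l ∉ U := by simpa using hl
        have hlj : l ≠ j := fun h => hlU (h ▸ hjU)
        exact hlU (Finset.mem_biUnion.mpr ⟨k, Finset.mem_of_mem_erase hk,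
          by simp [ht, hki, hpos, hlj]⟩)
    · -- case i ∉ A : zero block A × (Uᶜ \ {j})
      have hAlt : A.card < n := by
        have := Finset.card_lt_univ_of_notMem hiA
        simpa using this
      have hTcard : n - U.card - 1 ≤ (Uᶜ.erase j).card := by
        have h2 : Uᶜ.card - 1 ≤ (Uᶜ.erase j).card := Finset.pred_card_le_card_erase
        rw [Finset.card_compl, Fintype.card_fin] at h2; omega
      apply hfi
      refine key A (Uᶜ.erase j) ?_ ?_ ⟨i, hiA⟩ ⟨j, by simp⟩ ?_ ?_
      · exact Finset.card_pos.mp (by omega)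
      · rw [← Finset.card_pos]; omega
      · omega
      · intro k hk l hl
        by_contra hne
        have hpos : 0 < B k l := lt_of_le_of_ne (hB k l) (Ne.symm hne)
        have hki : k ≠ i := fun h => hiA (h ▸ hk)
        have hlj : l ≠ j := Finset.ne_of_mem_erase hl
        have hlU : l ∉ U := by
          have := Finset.mem_of_mem_erase hl; simpa using this
        exact hlU (Finset.mem_biUnion.mpr ⟨k, hk, by simp [ht, hki, hpos, hlj]⟩)
  obtain ⟨f, hfinj, hft⟩ :=
    (Finset.all_card_le_biUnion_card_iff_existsInjective' t).mp hall
  have hfbij : Function.Bijective f := Finite.injective_iff_bijective.mp hfinj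
  refine ⟨Equiv.ofBijective f hfbij, ?_, ?_⟩
  · have := hft i; simp [ht] at this; simpa [Equiv.ofBijective] using this
  · intro k
    show 0 < B k (f k)
    by_cases hk : k = i
    · subst hk
      have : f k = j := by have := hft k; simpa [ht] using this
      rw [this]
      exact lt_of_le_of_ne (hB k j) (Ne.symm hij)
    · have := hft k; simp [ht, hk] at this; exact this.1
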